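/- There exists a > 0 such that f(t)/√t tends to a as t tends to +∞. -/

import Mathlib

open Real Filter

noncomputable def Gaux (y : ℝ) : ℝ :=
  y * Real.sqrt (1 + 2 * y ^ 2) / 2 + Real.arsinh (Real.sqrt 2 * y) / (2 * Real.sqrt 2)

lemma sqrt_aux_pos (y : ℝ) : 0 < Real.sqrt (1 + 2 * y ^ 2) :=
  Real.sqrt_pos.mpr (by positivity)

lemma hGderiv (y : ℝ) : HasDerivAt Gaux (Real.sqrt (1 + 2 * y ^ 2)) y := by
  have hs : (0:ℝ) < 1 + 2 * y ^ 2 := by positivity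
  have hsq := sqrt_aux_pos y
  have h1 : HasDerivAt (fun y : ℝ => 1 + 2 * y ^ 2) (4 * y) y := by
    have h := ((hasDerivAt_pow 2 y).const_mul 2).const_add (1:ℝ)
    refine h.congr_deriv ?_
    norm_num
    ring
  have h2 : HasDerivAt (fun y : ℝ => Real.sqrt (1 + 2 * y ^ 2))
      (1 / (2 * Real.sqrt (1 + 2 * y ^ 2)) * (4 * y)) y :=
    (Real.hasDerivAt_sqrt hs.ne').comp y h1
  have h3 : HasDerivAt (fun y : ℝ => y * Real.sqrt (1 + 2 * y ^ 2) / 2)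
      ((1 * Real.sqrt (1 + 2 * y ^ 2) + y * (1 / (2 * Real.sqrt (1 + 2 * y ^ 2)) * (4 * y))) / 2) y :=
    ((hasDerivAt_id y).mul h2).div_const 2
  have h4 : HasDerivAt (fun y : ℝ => Real.arsinh (Real.sqrt 2 * y) / (2 * Real.sqrt 2))
      ((Real.sqrt (1 + (Real.sqrt 2 * y) ^ 2))⁻¹ * Real.sqrt 2 / (2 * Real.sqrt 2)) y := by
    have hin : HasDerivAt (fun y : ℝ => Real.sqrt 2 * y) (Real.sqrt 2) y := by
      simpa using (hasDerivAt_id y).const_mul (Real.sqrt 2)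
    exact ((Real.hasDerivAt_arsinh (Real.sqrt 2 * y)).comp y hin).div_const _
  have hmm : (1 + (Real.sqrt 2 * y) ^ 2) = 1 + 2 * y ^ 2 := by
    rw [mul_pow, Real.sq_sqrt (by norm_num : (0:ℝ) ≤ 2)]
  rw [hmm] at h4
  have := h3.add h4
  refine this.congr_deriv (Eq.symm ?_)
  have h2pos : (0:ℝ) < Real.sqrt 2 := Real.sqrt_pos.mpr (by norm_num)
  have hms : Real.sqrt (1 + 2 * y ^ 2) * Real.sqrt (1 + 2 * y ^ 2) = 1 + 2 * y ^ 2 :=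
    Real.mul_self_sqrt hs.le
  set s := Real.sqrt (1 + 2 * y ^ 2) with hsdef
  field_simp
  ring_nf
  linear_combination 2 * hms

lemma Gaux_mono : StrictMono Gaux := by
  have hdiff : ∀ y, HasDerivAt Gaux (Real.sqrt (1 + 2 * y ^ 2)) y := hGderiv
  exact strictMono_of_deriv_pos fun y => by
    rw [(hdiff y).deriv]; exact sqrt_aux_pos y

lemma Gaux_zero : Gaux 0 = 0 := by simp [Gaux]

lemma Gaux_pos {y : ℝ} (hy : 0 < y) : 0 < Gaux y := by
  have := Gaux_mono hy
  rwa [Gaux_zero] at this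

lemma arsinh_le_self {x : ℝ} (hx : 0 ≤ x) : Real.arsinh x ≤ x := by
  rw [← Real.sinh_le_sinh, Real.sinh_arsinh]
  exact Real.self_le_sinh_iff.mpr hx

lemma Gaux_lim : Filter.Tendsto (fun y : ℝ => y / Real.sqrt (Gaux y)) Filter.atTop
    (nhds (Real.sqrt (Real.sqrt 2))) := by
  have h2pos : (0:ℝ) < Real.sqrt 2 := Real.sqrt_pos.mpr (by norm_num)
  have hT1 : Filter.Tendsto (fun y : ℝ => Real.sqrt (1 + 2 * y ^ 2) / (2 * y)) Filter.atTop
      (nhds (Real.sqrt 2 / 2)) := by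
    have hp : Filter.Tendsto (fun y : ℝ => y ^ 2) Filter.atTop Filter.atTop :=
      tendsto_pow_atTop (by norm_num)
    have h0a : Filter.Tendsto (fun y : ℝ => 1 / y ^ 2) Filter.atTop (nhds 0) :=
      Filter.Tendsto.div_atTop tendsto_const_nhds hp
    have h0 : Filter.Tendsto (fun y : ℝ => 1 / y ^ 2 + 2) Filter.atTop (nhds 2) := by
      have := h0a.add (tendsto_const_nhds (x := (2:ℝ)) (f := Filter.atTop))
      simpa using this
    have hs : Filter.Tendsto (fun y : ℝ => Real.sqrt (1 / y ^ 2 + 2) / 2) Filter.atTop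
        (nhds (Real.sqrt 2 / 2)) :=
      (Real.continuous_sqrt.continuousAt.tendsto.comp h0).div_const 2
    refine hs.congr' ?_
    filter_upwards [Filter.eventually_gt_atTop 0] with y hy
    have hy2 : (0:ℝ) < y ^ 2 := by positivity
    have h1 : 1 / y ^ 2 + 2 = (1 + 2 * y ^ 2) / y ^ 2 := by field_simp
    rw [h1, Real.sqrt_div' _ (sq_nonneg y), Real.sqrt_sq hy.le, div_div]
    ring
  have hT2 : Filter.Tendsto
      (fun y : ℝ => Real.arsinh (Real.sqrt 2 * y) / (2 * Real.sqrt 2 * y ^ 2))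
      Filter.atTop (nhds 0) := by
    have hbound : ∀ᶠ y : ℝ in Filter.atTop,
        |Real.arsinh (Real.sqrt 2 * y) / (2 * Real.sqrt 2 * y ^ 2)| ≤ 1 / (2 * y) := by
      filter_upwards [Filter.eventually_gt_atTop 0] with y hy
      have hxy : (0:ℝ) ≤ Real.sqrt 2 * y := by positivity
      have ha0 : 0 ≤ Real.arsinh (Real.sqrt 2 * y) := Real.arsinh_nonneg_iff.mpr hxy
      have ha1 : Real.arsinh (Real.sqrt 2 * y) ≤ Real.sqrt 2 * y := arsinh_le_self hxy
      have hden : (0:ℝ) < 2 * Real.sqrt 2 * y ^ 2 := by positivity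
      rw [abs_of_nonneg (by positivity)]
      rw [div_le_div_iff₀ hden (by positivity)]
      nlinarith [h2pos, hy, ha1]
    have hmul : Filter.Tendsto (fun y : ℝ => 2 * y) Filter.atTop Filter.atTop :=
      Filter.tendsto_atTop_atTop.mpr fun b => ⟨|b|, fun a ha => by
          have h1 := le_abs_self b
          have h2 := abs_nonneg b
          linarith⟩
    have hlim : Filter.Tendsto (fun y : ℝ => 1 / (2 * y)) Filter.atTop (nhds 0) :=
      Filter.Tendsto.div_atTop tendsto_const_nhds hmul
    exact squeeze_zero_norm' hbound hlim
  have hsum : Filter.Tendsto (fun y : ℝ => Gaux y / y ^ 2) Filter.atTop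
      (nhds (Real.sqrt 2 / 2)) := by
    have := hT1.add hT2
    rw [add_zero] at this
    refine this.congr' ?_
    filter_upwards [Filter.eventually_gt_atTop 0] with y hy
    have hy2 : (0:ℝ) ≠ y ^ 2 := by positivity
    simp only [Gaux]
    field_simp
  have hhalf : (0:ℝ) < Real.sqrt 2 / 2 := by positivity
  have hinv : Filter.Tendsto (fun y : ℝ => y ^ 2 / Gaux y) Filter.atTop
      (nhds (Real.sqrt 2)) := by
    have h := hsum.inv₀ hhalf.ne'
    have hval : (Real.sqrt 2 / 2)⁻¹ = Real.sqrt 2 := by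
      rw [inv_div]
      rw [div_eq_iff h2pos.ne']
      exact (Real.mul_self_sqrt (by norm_num)).symm
    rw [hval] at h
    refine h.congr' ?_
    filter_upwards [Filter.eventually_gt_atTop 0] with y hy
    rw [inv_div]
  have hcomp : Filter.Tendsto (fun y : ℝ => Real.sqrt (y ^ 2 / Gaux y)) Filter.atTop
      (nhds (Real.sqrt (Real.sqrt 2))) :=
    Real.continuous_sqrt.continuousAt.tendsto.comp hinv
  refine hcomp.congr' ?_
  filter_upwards [Filter.eventually_gt_atTop 0] with y hy
  rw [Real.sqrt_div (sq_nonneg y), Real.sqrt_sq hy.le]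

theorem stmt_5 (f : ℝ → ℝ) (hf0 : f 0 = 0) (hodd : ∀ t : ℝ, f (-t) = -f t)
    (hf1 : ∀ t : ℝ, 0 ≤ t → HasDerivAt f ((1 + 2 * f t ^ 2) ^ (-(1/2) : ℝ)) t) :
    ∃ a : ℝ, 0 < a ∧
      Filter.Tendsto (fun t : ℝ => f t / Real.sqrt t) Filter.atTop (nhds a) := by
  have hr : ∀ x : ℝ, 0 < x → x ^ (-(1/2) : ℝ) = (Real.sqrt x)⁻¹ := by
    intro x hx
    rw [Real.rpow_neg hx.le, ← Real.sqrt_eq_rpow]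
  have hf1' : ∀ t : ℝ, HasDerivAt f ((1 + 2 * f t ^ 2) ^ (-(1/2) : ℝ)) t := by
    intro t
    rcases le_or_gt 0 t with ht | ht
    · exact hf1 t ht
    · have hneg : (0:ℝ) ≤ -t := by linarith
      have h := hf1 (-t) hneg
      have hin : HasDerivAt (fun s : ℝ => -s) (-1) t := (hasDerivAt_id t).neg
      have h2 : HasDerivAt (fun s : ℝ => f (-s))
          ((1 + 2 * f (-t) ^ 2) ^ (-(1/2):ℝ) * (-1)) t := h.comp t hin
      have h3 : HasDerivAt (fun s : ℝ => -f (-s)) _ t := h2.neg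
      have hfe : (fun s : ℝ => -f (-s)) = f := by
        funext s; rw [hodd s]; ring
      rw [hfe] at h3
      refine h3.congr_deriv ?_
      rw [hodd]
      ring
  have hzero : ∀ t : ℝ, HasDerivAt (fun t => Gaux (f t) - t) 0 t := by
    intro t
    have hs : (0:ℝ) < 1 + 2 * f t ^ 2 := by positivity
    have hsq : (0:ℝ) < Real.sqrt (1 + 2 * f t ^ 2) := Real.sqrt_pos.mpr hs
    have h := ((hGderiv (f t)).comp t (hf1' t)).sub (hasDerivAt_id t)
    refine h.congr_deriv (Eq.symm ?_)
    rw [hr _ hs]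
    field_simp
    ring
  have hconst : ∀ t, Gaux (f t) = t := by
    intro t
    have := is_const_of_deriv_eq_zero (f := fun t => Gaux (f t) - t)
      (fun x => (hzero x).differentiableAt) (fun x => (hzero x).deriv) t 0
    simp only [hf0, Gaux_zero, sub_zero] at this
    linarith
  have htop : Filter.Tendsto f Filter.atTop Filter.atTop := by
    rw [Filter.tendsto_atTop]
    intro b
    filter_upwards [Filter.eventually_ge_atTop (Gaux b)] with t ht
    have h : Gaux b ≤ Gaux (f t) := by rw [hconst]; exact ht
    exact Gaux_mono.le_iff_le.mp h
  refine ⟨Real.sqrt (Real.sqrt 2), Real.sqrt_pos.mpr (Real.sqrt_pos.mpr two_pos), ?_⟩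
  have hc := Gaux_lim.comp htop
  refine hc.congr fun t => ?_
  simp only [Function.comp]
  rw [hconst]
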